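/- In the group Γ_{2k-1} = ⟨x, y, t | [x,y]^((2k-1)²), [[x,y],x], [[x,y],y], t x t⁻¹ = x⁻¹, t y t⁻¹ = y⁻¹⟩, the commutator subgroup [Γ_{2k-1}, Γ_{2k-1}] equals the subgroup generated by x² and y². -/

import Mathlib

inductive Gen : Type
  | x | y | t

open FreeGroup commutatorElement in
/-- Relations of `Γ_m = ⟨x, y, t | [x,y]^(m²), [[x,y],x], [[x,y],y],
t x t⁻¹ = x⁻¹, t y t⁻¹ = y⁻¹⟩` (with `m = 2k-1`). -/
def gammaRelsM (m : ℕ) : Set (FreeGroup Gen) :=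
  { ⁅of Gen.x, of Gen.y⁆ ^ (m ^ 2),
    ⁅⁅of Gen.x, of Gen.y⁆, of Gen.x⁆,
    ⁅⁅of Gen.x, of Gen.y⁆, of Gen.y⁆,
    of Gen.t * of Gen.x * (of Gen.t)⁻¹ * of Gen.x,
    of Gen.t * of Gen.y * (of Gen.t)⁻¹ * of Gen.y }

open commutatorElement

section AuxGroup

variable {G : Type*} [Group G]

/-- If `u v u⁻¹ = d v` and `d` commutes with `v`, then `u v² u⁻¹ = d² v²`. -/
lemma aux_conj_sq {u v d : G} (h : u * v * u⁻¹ = d * v) (hdv : d * v = v * d) :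
    u * v ^ 2 * u⁻¹ = d ^ 2 * v ^ 2 := by
  calc u * v ^ 2 * u⁻¹ = (u * v * u⁻¹) * (u * v * u⁻¹) := by (try simp only [pow_two]); group
    _ = (d * v) * (d * v) := by rw [h]
    _ = d * (v * d) * v := by (try simp only [pow_two]); group
    _ = d * (d * v) * v := by rw [hdv]
    _ = d ^ 2 * v ^ 2 := by (try simp only [pow_two]); group

/-- If `u v u⁻¹ = d v` and `d` commutes with `u`, then `u⁻¹ v u = d⁻¹ v`. -/
lemma aux_conj_inv {u v d : G} (h : u * v * u⁻¹ = d * v) (hdu : d * u = u * d) :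
    u⁻¹ * v * u = d⁻¹ * v := by
  have hdu2 : d⁻¹ * u = u * d⁻¹ := ((show Commute d u from hdu).inv_left).eq
  calc u⁻¹ * v * u = u⁻¹ * d⁻¹ * (d * v) * u := by (try simp only [pow_two]); group
    _ = u⁻¹ * d⁻¹ * (u * v * u⁻¹) * u := by rw [h]
    _ = u⁻¹ * (d⁻¹ * u) * v := by (try simp only [pow_two]); group
    _ = u⁻¹ * (u * d⁻¹) * v := by rw [hdu2]
    _ = d⁻¹ * v := by (try simp only [pow_two]); group

end AuxGroup

/-- In `Γ_{2k-1}`, the commutator subgroup equals the subgroup generated by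
`x²` and `y²`. -/
theorem stmt_4 (k : ℕ) (hk : 1 ≤ k) :
    commutator (PresentedGroup (gammaRelsM (2 * k - 1))) =
      Subgroup.closure
        { PresentedGroup.of Gen.x ^ 2, PresentedGroup.of Gen.y ^ 2 } := by
  set m : ℕ := 2 * k - 1 with hm
  set G' := PresentedGroup (gammaRelsM m) with hG'
  set X : G' := PresentedGroup.of Gen.x with hX
  set Y : G' := PresentedGroup.of Gen.y with hY
  set T : G' := PresentedGroup.of Gen.t with hT
  set c : G' := ⁅X, Y⁆ with hcdef
  set N : Subgroup G' := Subgroup.closure {X ^ 2, Y ^ 2} with hN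
  -- membership of generators in N
  have hX2N : X ^ 2 ∈ N := Subgroup.subset_closure (Set.mem_insert _ _)
  have hY2N : Y ^ 2 ∈ N :=
    Subgroup.subset_closure (Set.mem_insert_of_mem _ rfl)
  -- the relations hold in G'
  have hrel : ∀ r ∈ gammaRelsM m, PresentedGroup.mk (gammaRelsM m) r = 1 := by
    intro r hr
    exact (QuotientGroup.eq_one_iff r).mpr (Subgroup.subset_normalClosure hr)
  have hofx : PresentedGroup.mk (gammaRelsM m) (FreeGroup.of Gen.x) = X := rfl
  have hofy : PresentedGroup.mk (gammaRelsM m) (FreeGroup.of Gen.y) = Y := rfl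
  have hoft : PresentedGroup.mk (gammaRelsM m) (FreeGroup.of Gen.t) = T := rfl
  have hc : c ^ (m ^ 2) = 1 := by
    have := hrel _ (show _ ∈ gammaRelsM m from Set.mem_insert _ _)
    rwa [map_pow, map_commutatorElement, hofx, hofy] at this
  have hcx : c * X = X * c := by
    have := hrel _ (show ⁅⁅FreeGroup.of Gen.x, FreeGroup.of Gen.y⁆, FreeGroup.of Gen.x⁆ ∈
      gammaRelsM m from Set.mem_insert_of_mem _ (Set.mem_insert _ _))
    rw [map_commutatorElement, map_commutatorElement, hofx, hofy] at this
    exact commutatorElement_eq_one_iff_mul_comm.mp this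
  have hcy : c * Y = Y * c := by
    have := hrel _ (show ⁅⁅FreeGroup.of Gen.x, FreeGroup.of Gen.y⁆, FreeGroup.of Gen.y⁆ ∈
      gammaRelsM m from Set.mem_insert_of_mem _ (Set.mem_insert_of_mem _ (Set.mem_insert _ _)))
    rw [map_commutatorElement, map_commutatorElement, hofx, hofy] at this
    exact commutatorElement_eq_one_iff_mul_comm.mp this
  have htx : T * X * T⁻¹ = X⁻¹ := by
    have := hrel _ (show FreeGroup.of Gen.t * FreeGroup.of Gen.x * (FreeGroup.of Gen.t)⁻¹ *
      FreeGroup.of Gen.x ∈ gammaRelsM m from Set.mem_insert_of_mem _ (Set.mem_insert_of_mem _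
        (Set.mem_insert_of_mem _ (Set.mem_insert _ _))))
    rw [map_mul, map_mul, map_mul, map_inv, hofx, hoft] at this
    exact eq_inv_of_mul_eq_one_left this
  have hty : T * Y * T⁻¹ = Y⁻¹ := by
    have := hrel _ (show FreeGroup.of Gen.t * FreeGroup.of Gen.y * (FreeGroup.of Gen.t)⁻¹ *
      FreeGroup.of Gen.y ∈ gammaRelsM m from Set.mem_insert_of_mem _ (Set.mem_insert_of_mem _
        (Set.mem_insert_of_mem _ (Set.mem_insert_of_mem _ rfl))))
    rw [map_mul, map_mul, map_mul, map_inv, hofy, hoft] at this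
    exact eq_inv_of_mul_eq_one_left this
  -- basic conjugation relations
  have hXYX : X * Y * X⁻¹ = c * Y := by rw [hcdef, commutatorElement_def]; group
  have hYXY : Y * X * Y⁻¹ = c⁻¹ * X := by rw [hcdef, commutatorElement_def]; group
  have hcinvx : c⁻¹ * X = X * c⁻¹ := ((show Commute c X from hcx).inv_left).eq
  have hcinvy : c⁻¹ * Y = Y * c⁻¹ := ((show Commute c Y from hcy).inv_left).eq
  have hXY2X : X * Y ^ 2 * X⁻¹ = c ^ 2 * Y ^ 2 := aux_conj_sq hXYX hcy
  have hXinvY2X : X⁻¹ * Y ^ 2 * X = c⁻¹ ^ 2 * Y ^ 2 :=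
    aux_conj_sq (aux_conj_inv hXYX hcx) hcinvy
  have hYX2Y : Y * X ^ 2 * Y⁻¹ = c⁻¹ ^ 2 * X ^ 2 := aux_conj_sq hYXY hcinvx
  have hYinvX2Y : Y⁻¹ * X ^ 2 * Y = c ^ 2 * X ^ 2 := by
    have := aux_conj_sq (aux_conj_inv hYXY hcinvy) hcx
    rwa [inv_inv] at this
  have htxinv : T⁻¹ * X * T = X⁻¹ := by
    have h3 : T⁻¹ * (T * X * T⁻¹) * T = T⁻¹ * X⁻¹ * T := by rw [htx]
    have h4 : X = T⁻¹ * X⁻¹ * T := by rw [← h3]; group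
    calc T⁻¹ * X * T = (T⁻¹ * X⁻¹ * T)⁻¹ := by (try simp only [pow_two]); group
      _ = X⁻¹ := by rw [← h4]
  have htyinv : T⁻¹ * Y * T = Y⁻¹ := by
    have h3 : T⁻¹ * (T * Y * T⁻¹) * T = T⁻¹ * Y⁻¹ * T := by rw [hty]
    have h4 : Y = T⁻¹ * Y⁻¹ * T := by rw [← h3]; group
    calc T⁻¹ * Y * T = (T⁻¹ * Y⁻¹ * T)⁻¹ := by (try simp only [pow_two]); group
      _ = Y⁻¹ := by rw [← h4]
  have hTX2T : T * X ^ 2 * T⁻¹ = (X ^ 2)⁻¹ := by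
    calc T * X ^ 2 * T⁻¹ = (T * X * T⁻¹) * (T * X * T⁻¹) := by (try simp only [pow_two]); group
      _ = X⁻¹ * X⁻¹ := by rw [htx]
      _ = (X ^ 2)⁻¹ := by (try simp only [pow_two]); group
  have hTY2T : T * Y ^ 2 * T⁻¹ = (Y ^ 2)⁻¹ := by
    calc T * Y ^ 2 * T⁻¹ = (T * Y * T⁻¹) * (T * Y * T⁻¹) := by (try simp only [pow_two]); group
      _ = Y⁻¹ * Y⁻¹ := by rw [hty]
      _ = (Y ^ 2)⁻¹ := by (try simp only [pow_two]); group
  have hTinvX2T : T⁻¹ * X ^ 2 * T = (X ^ 2)⁻¹ := by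
    calc T⁻¹ * X ^ 2 * T = (T⁻¹ * X * T) * (T⁻¹ * X * T) := by (try simp only [pow_two]); group
      _ = X⁻¹ * X⁻¹ := by rw [htxinv]
      _ = (X ^ 2)⁻¹ := by (try simp only [pow_two]); group
  have hTinvY2T : T⁻¹ * Y ^ 2 * T = (Y ^ 2)⁻¹ := by
    calc T⁻¹ * Y ^ 2 * T = (T⁻¹ * Y * T) * (T⁻¹ * Y * T) := by (try simp only [pow_two]); group
      _ = Y⁻¹ * Y⁻¹ := by rw [htyinv]
      _ = (Y ^ 2)⁻¹ := by (try simp only [pow_two]); group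
  -- the central commutator c lies in N
  have hc4 : ⁅X ^ 2, Y ^ 2⁆ = c ^ 4 := by
    have e2 : X * c ^ 2 * X⁻¹ = c ^ 2 := by
      have h := ((show Commute c X from hcx).pow_left 2).inv_right.eq
      rw [mul_assoc, h, ← mul_assoc, mul_inv_cancel, one_mul]
    calc ⁅X ^ 2, Y ^ 2⁆ = X * (X * Y ^ 2 * X⁻¹) * X⁻¹ * (Y ^ 2)⁻¹ := by
          rw [commutatorElement_def]; simp only [pow_two]; group
      _ = X * (c ^ 2 * Y ^ 2) * X⁻¹ * (Y ^ 2)⁻¹ := by rw [hXY2X]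
      _ = (X * c ^ 2 * X⁻¹) * (X * Y ^ 2 * X⁻¹) * (Y ^ 2)⁻¹ := by (try simp only [pow_two]); group
      _ = c ^ 2 * (c ^ 2 * Y ^ 2) * (Y ^ 2)⁻¹ := by rw [e2, hXY2X]
      _ = c ^ 4 := by rw [show (4:ℕ) = 2 + 2 from rfl, pow_add]; group
  have hc4N : c ^ 4 ∈ N := by
    rw [← hc4, commutatorElement_def]
    exact mul_mem (mul_mem (mul_mem hX2N hY2N) (inv_mem hX2N)) (inv_mem hY2N)
  have hcN : c ∈ N := by
    have harith : m ^ 2 = 4 * (k ^ 2 - k) + 1 := by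
      obtain ⟨j, rfl⟩ : ∃ j, k = j + 1 := ⟨k - 1, by omega⟩
      have h1 : m = 2 * j + 1 := by omega
      have h2 : (j + 1) ^ 2 - (j + 1) = j ^ 2 + j := by
        have : (j + 1) ^ 2 = j ^ 2 + 2 * j + 1 := by ring
        omega
      rw [h1, h2]; ring
    have h5 : c ^ (4 * (k ^ 2 - k)) * c = 1 := by
      rw [← pow_succ, ← harith]; exact hc
    have h6 : c = (c ^ (4 * (k ^ 2 - k)))⁻¹ := eq_inv_of_mul_eq_one_right h5
    rw [h6, pow_mul]
    exact inv_mem (pow_mem hc4N _)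
  have hc2N : c ^ 2 ∈ N := pow_mem hcN 2
  have hcinv2N : c⁻¹ ^ 2 ∈ N := pow_mem (inv_mem hcN) 2
  -- N is normal
  have step : ∀ g : G', g * X ^ 2 * g⁻¹ ∈ N → g * Y ^ 2 * g⁻¹ ∈ N →
      ∀ n ∈ N, g * n * g⁻¹ ∈ N := by
    intro g hgx hgy n hn
    induction hn using Subgroup.closure_induction with
    | mem s hs =>
      rcases hs with hs | hs
      · rwa [hs]
      · rw [Set.mem_singleton_iff] at hs; rwa [hs]
    | one => simpa using one_mem N
    | mul a b _ _ ha hb =>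
      have : g * (a * b) * g⁻¹ = (g * a * g⁻¹) * (g * b * g⁻¹) := by (try simp only [pow_two]); group
      rw [this]; exact mul_mem ha hb
    | inv a _ ha =>
      have : g * a⁻¹ * g⁻¹ = (g * a * g⁻¹)⁻¹ := by (try simp only [pow_two]); group
      rw [this]; exact inv_mem ha
  have key : ∀ g : G', (∀ n ∈ N, g * n * g⁻¹ ∈ N) ∧ (∀ n ∈ N, g⁻¹ * n * g ∈ N) := by
    intro g
    have hg : g ∈ Subgroup.closure (Set.range (PresentedGroup.of (rels := gammaRelsM m))) := by
      rw [PresentedGroup.closure_range_of]; trivial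
    induction hg using Subgroup.closure_induction with
    | mem s hs =>
      obtain ⟨a, rfl⟩ := hs
      cases a with
      | x =>
        constructor
        · refine step X ?_ ?_
          · have : X * X ^ 2 * X⁻¹ = X ^ 2 := by (try simp only [pow_two]); group
            rw [this]; exact hX2N
          · rw [hXY2X]; exact mul_mem hc2N hY2N
        · have hstep := step X⁻¹ ?_ ?_
          · intro n hn
            have : (X⁻¹)⁻¹ = X := inv_inv X
            have h := hstep n hn; erw [inv_inv] at h; exact h
          · have : X⁻¹ * X ^ 2 * X⁻¹⁻¹ = X ^ 2 := by (try simp only [pow_two]); group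
            rw [this]; exact hX2N
          · have : X⁻¹ * Y ^ 2 * X⁻¹⁻¹ = X⁻¹ * Y ^ 2 * X := by rw [inv_inv]
            rw [this, hXinvY2X]; exact mul_mem hcinv2N hY2N
      | y =>
        constructor
        · refine step Y ?_ ?_
          · rw [hYX2Y]; exact mul_mem hcinv2N hX2N
          · have : Y * Y ^ 2 * Y⁻¹ = Y ^ 2 := by (try simp only [pow_two]); group
            rw [this]; exact hY2N
        · have hstep := step Y⁻¹ ?_ ?_
          · intro n hn
            have h := hstep n hn; erw [inv_inv] at h; exact h
          · have : Y⁻¹ * X ^ 2 * Y⁻¹⁻¹ = Y⁻¹ * X ^ 2 * Y := by erw [inv_inv]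
            rw [this, hYinvX2Y]; exact mul_mem hc2N hX2N
          · have : Y⁻¹ * Y ^ 2 * Y⁻¹⁻¹ = Y ^ 2 := by (try simp only [pow_two]); group
            rw [this]; exact hY2N
      | t =>
        constructor
        · refine step T ?_ ?_
          · rw [hTX2T]; exact inv_mem hX2N
          · rw [hTY2T]; exact inv_mem hY2N
        · have hstep := step T⁻¹ ?_ ?_
          · intro n hn
            have h := hstep n hn; erw [inv_inv] at h; exact h
          · have : T⁻¹ * X ^ 2 * T⁻¹⁻¹ = T⁻¹ * X ^ 2 * T := by erw [inv_inv]
            rw [this, hTinvX2T]; exact inv_mem hX2N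
          · have : T⁻¹ * Y ^ 2 * T⁻¹⁻¹ = T⁻¹ * Y ^ 2 * T := by rw [inv_inv]
            rw [this, hTinvY2T]; exact inv_mem hY2N
    | one =>
      constructor <;> · intro n hn; simpa using hn
    | mul a b _ _ ha hb =>
      constructor
      · intro n hn
        have : a * b * n * (a * b)⁻¹ = a * (b * n * b⁻¹) * a⁻¹ := by (try simp only [pow_two]); group
        rw [this]; exact ha.1 _ (hb.1 n hn)
      · intro n hn
        have : (a * b)⁻¹ * n * (a * b) = b⁻¹ * (a⁻¹ * n * a) * b := by (try simp only [pow_two]); group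
        rw [this]; exact hb.2 _ (ha.2 n hn)
    | inv a _ ha =>
      constructor
      · intro n hn; rw [inv_inv]; exact ha.2 n hn
      · intro n hn; erw [inv_inv]; exact ha.1 n hn
  have hNormal : N.Normal := ⟨fun n hn g => (key g).1 n hn⟩
  -- pass to the quotient
  letI := hNormal
  set π := QuotientGroup.mk' N with hπ
  have hπsurj : Function.Surjective π := QuotientGroup.mk'_surjective N
  -- the quotient is generated by the images of the generators
  set S : Set (G' ⧸ N) := π '' Set.range (PresentedGroup.of (rels := gammaRelsM m)) with hS
  have hStop : Subgroup.closure S = ⊤ := by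
    rw [hS, ← MonoidHom.map_closure, PresentedGroup.closure_range_of,
      ← MonoidHom.range_eq_map]
    exact MonoidHom.range_eq_top.2 hπsurj
  -- images of generators commute pairwise
  have hπX2 : π X * π X = 1 := by
    have : π (X ^ 2) = 1 := (QuotientGroup.eq_one_iff _).mpr hX2N
    rw [map_pow] at this; rw [← sq]; exact this
  have hπY2 : π Y * π Y = 1 := by
    have : π (Y ^ 2) = 1 := (QuotientGroup.eq_one_iff _).mpr hY2N
    rw [map_pow] at this; rw [← sq]; exact this
  have hπXY : π X * π Y = π Y * π X := by
    have : π c = 1 := (QuotientGroup.eq_one_iff _).mpr hcN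
    rw [hcdef, map_commutatorElement] at this
    exact commutatorElement_eq_one_iff_mul_comm.mp this
  have hπTX : π T * π X = π X * π T := by
    have h2 : π T * π X * (π T)⁻¹ = (π X)⁻¹ := by
      have := congrArg π htx
      rw [map_mul, map_mul, map_inv, map_inv] at this
      exact this
    have hinv : (π X)⁻¹ = π X := by
      rw [inv_eq_iff_mul_eq_one]; exact hπX2
    calc π T * π X = (π T * π X * (π T)⁻¹) * π T := by (try simp only [pow_two]); group
      _ = (π X)⁻¹ * π T := by rw [h2]
      _ = π X * π T := by rw [hinv]
  have hπTY : π T * π Y = π Y * π T := by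
    have h2 : π T * π Y * (π T)⁻¹ = (π Y)⁻¹ := by
      have := congrArg π hty
      rw [map_mul, map_mul, map_inv, map_inv] at this
      exact this
    have hinv : (π Y)⁻¹ = π Y := by
      rw [inv_eq_iff_mul_eq_one]; exact hπY2
    calc π T * π Y = (π T * π Y * (π T)⁻¹) * π T := by (try simp only [pow_two]); group
      _ = (π Y)⁻¹ * π T := by rw [h2]
      _ = π Y * π T := by rw [hinv]
  have hcomm : ∀ a ∈ S, ∀ b ∈ S, a * b = b * a := by
    rintro a ⟨_, ⟨u, rfl⟩, rfl⟩ b ⟨_, ⟨v, rfl⟩, rfl⟩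
    cases u <;> cases v
    · rfl
    · exact hπXY
    · exact hπTX.symm
    · exact hπXY.symm
    · rfl
    · exact hπTY.symm
    · exact hπTX
    · exact hπTY
    · rfl
  have habelian : ∀ a b : G' ⧸ N, a * b = b * a := by
    intro a b
    have hcc := Subgroup.closure_le_centralizer_centralizer S
    have ha : a ∈ Subgroup.closure S := by rw [hStop]; trivial
    have hb : b ∈ Subgroup.closure S := by rw [hStop]; trivial
    exact Set.centralizer_centralizer_comm_of_comm hcomm a (hcc ha) b (hcc hb)
  -- all commutators lie in N
  have hcommN : ∀ g h : G', ⁅g, h⁆ ∈ N := by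
    intro g h
    rw [show (⁅g, h⁆ ∈ N) ↔ π ⁅g, h⁆ = 1 from (QuotientGroup.eq_one_iff _).symm]
    rw [map_commutatorElement, commutatorElement_eq_one_iff_mul_comm]
    exact habelian _ _
  -- conclude
  apply le_antisymm
  · rw [_root_.commutator_def]
    exact Subgroup.commutator_le.mpr fun g _ h _ => hcommN g h
  · rw [Subgroup.closure_le]
    rintro s (hs | hs)
    · -- X^2 = ⁅X, T⁆ ∈ commutator
      have hTXinvT : T * X⁻¹ * T⁻¹ = X := by
        have := congrArg (·⁻¹) htx
        simp only [mul_inv_rev, inv_inv] at this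
        calc T * X⁻¹ * T⁻¹ = (T * X * T⁻¹)⁻¹ := by (try simp only [pow_two]); group
          _ = X := by rw [htx]; group
      have heq : ⁅X, T⁆ = X ^ 2 := by
        calc ⁅X, T⁆ = X * (T * X⁻¹ * T⁻¹) := by rw [commutatorElement_def]; group
          _ = X * X := by rw [hTXinvT]
          _ = X ^ 2 := (pow_two X).symm
      rw [hs, ← heq]
      exact Subgroup.commutator_mem_commutator (Subgroup.mem_top X) (Subgroup.mem_top T)
    · have hTYinvT : T * Y⁻¹ * T⁻¹ = Y := by
        calc T * Y⁻¹ * T⁻¹ = (T * Y * T⁻¹)⁻¹ := by (try simp only [pow_two]); group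
          _ = Y := by rw [hty]; group
      have heq : ⁅Y, T⁆ = Y ^ 2 := by
        calc ⁅Y, T⁆ = Y * (T * Y⁻¹ * T⁻¹) := by rw [commutatorElement_def]; group
          _ = Y * Y := by rw [hTYinvT]
          _ = Y ^ 2 := (pow_two Y).symm
      rw [Set.mem_singleton_iff] at hs
      rw [hs, ← heq]
      exact Subgroup.commutator_mem_commutator (Subgroup.mem_top Y) (Subgroup.mem_top T)
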